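/- arXiv:2312.10810 — 2 statements merged into one kernel-verified Lean document; each statement's English description precedes it below -/
import Mathlib

section
/- Let Σ = {a,b,#} and for n ∈ ℕ let P_n = { w # wᴿ : w ∈ {a,b}ⁿ } ⊆ Σ*. Suppose L ⊆ Γ* is a language over an alphabet Γ = {a,b,#₁,…,#_m} such that (i) h(L) = P_n for the homomorphism h : Γ* → Σ* fixing a,b and sending each #ᵢ to #, and (ii) L is closed in the sense that whenever u#ᵢuᴿ ∈ L and v#ᵢvᴿ ∈ L then u#ᵢvᴿ ∈ L. Then for each i ∈ {1,…,m} there is at most one w ∈ {a,b}ⁿ with w#ᵢwᴿ corresponding to an element of L, and consequently m ≥ 2ⁿ. -/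
private lemma aux1 {m : ℕ} : ∀ (y : List (Bool ⊕ Fin m)) (w : List Bool),
    y.map (Sum.map id fun _ => ()) = w.map Sum.inl → y = w.map Sum.inl := by
  intro y
  induction y with
  | nil => intro w h; cases w <;> simp_all
  | cons a t ih =>
    intro w h
    cases w with
    | nil => simp at h
    | cons b s =>
      simp only [List.map_cons, List.cons.injEq] at h ⊢
      cases a with
      | inl c => exact ⟨by simpa using h.1, ih s h.2⟩
      | inr i => simp [Sum.map] at h

private lemma aux2 {m : ℕ} : ∀ (w : List Bool) (x : List (Bool ⊕ Fin m)) (t : List Bool),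
    x.map (Sum.map id fun _ => ()) = w.map Sum.inl ++ Sum.inr () :: t.map Sum.inl →
    ∃ i : Fin m, x = w.map Sum.inl ++ Sum.inr i :: t.map Sum.inl := by
  intro w
  induction w with
  | nil =>
    intro x t h
    cases x with
    | nil => simp at h
    | cons a y =>
      simp only [List.map_nil, List.map_cons, List.nil_append, List.cons.injEq,
        Sum.map_inl, Sum.map_inr] at h
      cases a with
      | inl c => simp [Sum.map] at h
      | inr i => exact ⟨i, by simp [aux1 y t h.2]⟩
  | cons b s ih =>
    intro x t h
    cases x with
    | nil => simp at h
    | cons a y =>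
      simp only [List.map_cons, List.cons_append, List.cons.injEq] at h
      cases a with
      | inl c =>
        obtain ⟨i, hi⟩ := ih y t h.2
        have hc : c = b := by simpa [Sum.map] using h.1
        exact ⟨i, by simp [hc, hi]⟩
      | inr i => simp [Sum.map] at h

/-- Each label #ᵢ witnesses at most one marked palindrome in L, hence m ≥ 2ⁿ.
Letters a, b are modelled as `Sum.inl true/false`; the marker # (resp. the
labelled markers #₁,…,#_m) as `Sum.inr ()` (resp. `Sum.inr i` for `i : Fin m`). -/
theorem labelled_palindromes (n m : ℕ) (L : Set (List (Bool ⊕ Fin m)))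
    -- (i) h(L) = Pₙ = { w#wᴿ : w ∈ {a,b}ⁿ }:
    (hproj : (fun x : List (Bool ⊕ Fin m) => x.map (Sum.map id fun _ => ())) '' L =
      {x : List (Bool ⊕ Unit) | ∃ w : List Bool, w.length = n ∧
        x = (w.map Sum.inl) ++ (Sum.inr ()) :: (w.reverse.map Sum.inl)})
    -- (ii) closure: u#ᵢuᴿ ∈ L and v#ᵢvᴿ ∈ L imply u#ᵢvᴿ ∈ L:
    (hclosed : ∀ (u v : List Bool) (i : Fin m),
      ((u.map Sum.inl) ++ (Sum.inr i) :: (u.reverse.map Sum.inl)) ∈ L →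
      ((v.map Sum.inl) ++ (Sum.inr i) :: (v.reverse.map Sum.inl)) ∈ L →
      ((u.map Sum.inl) ++ (Sum.inr i) :: (v.reverse.map Sum.inl)) ∈ L) :
    (∀ (i : Fin m) (u v : List Bool), u.length = n → v.length = n →
      ((u.map Sum.inl) ++ (Sum.inr i) :: (u.reverse.map Sum.inl)) ∈ L →
      ((v.map Sum.inl) ++ (Sum.inr i) :: (v.reverse.map Sum.inl)) ∈ L → u = v) ∧
    2 ^ n ≤ m := by
  have key : ∀ (i : Fin m) (u v : List Bool), u.length = n → v.length = n →
      ((u.map Sum.inl) ++ (Sum.inr i) :: (u.reverse.map Sum.inl)) ∈ L →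
      ((v.map Sum.inl) ++ (Sum.inr i) :: (v.reverse.map Sum.inl)) ∈ L → u = v := by
    intro i u v hu hv hmu hmv
    have hx := hclosed u v i hmu hmv
    have hmem : ((u.map Sum.inl ++ Sum.inr i :: v.reverse.map Sum.inl : List (Bool ⊕ Fin m)).map
        (Sum.map id fun _ => ())) ∈
        {x : List (Bool ⊕ Unit) | ∃ w : List Bool, w.length = n ∧
          x = (w.map Sum.inl) ++ (Sum.inr ()) :: (w.reverse.map Sum.inl)} := by
      rw [← hproj]; exact ⟨_, hx, rfl⟩
    obtain ⟨w, hwlen, hweq⟩ := hmem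
    simp only [List.map_append, List.map_cons, List.map_map, Function.comp_def,
      Sum.map_inl, Sum.map_inr, id_eq] at hweq
    have hlen : (u.map (Sum.inl : Bool → Bool ⊕ Unit)).length = (w.map (Sum.inl : Bool → Bool ⊕ Unit)).length := by
      simp [hu, hwlen]
    obtain ⟨h1, h2⟩ := List.append_inj hweq hlen
    have hinj : Function.Injective (Sum.inl : Bool → Bool ⊕ Unit) := Sum.inl_injective
    have huw : u = w := List.map_injective_iff.mpr hinj h1
    have h3 : (v.reverse.map (Sum.inl : Bool → Bool ⊕ Unit)) = w.reverse.map Sum.inl :=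
      (List.cons.injEq _ _ _ _ ▸ h2).2
    have hvw : v.reverse = w.reverse := List.map_injective_iff.mpr hinj h3
    rw [huw, List.reverse_injective hvw]
  refine ⟨key, ?_⟩
  -- build an injection (Fin n → Bool) → Fin m
  have hchoice : ∀ g : Fin n → Bool, ∃ i : Fin m,
      ((List.ofFn g).map Sum.inl ++ Sum.inr i :: ((List.ofFn g).reverse.map Sum.inl)) ∈ L := by
    intro g
    have hmem : ((List.ofFn g).map Sum.inl ++ Sum.inr () :: ((List.ofFn g).reverse.map Sum.inl)
        : List (Bool ⊕ Unit)) ∈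
        {x : List (Bool ⊕ Unit) | ∃ w : List Bool, w.length = n ∧
          x = (w.map Sum.inl) ++ (Sum.inr ()) :: (w.reverse.map Sum.inl)} :=
      ⟨List.ofFn g, by simp, rfl⟩
    rw [← hproj] at hmem
    obtain ⟨x, hxL, hxeq⟩ := hmem
    obtain ⟨i, hi⟩ := aux2 (List.ofFn g) x ((List.ofFn g).reverse) hxeq
    exact ⟨i, hi ▸ hxL⟩
  choose f hf using hchoice
  have hfinj : Function.Injective f := by
    intro g g' hgg'
    have := key (f g) (List.ofFn g) (List.ofFn g') (by simp) (by simp) (hf g) (hgg' ▸ hf g')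
    exact List.ofFn_injective this
  calc 2 ^ n = Fintype.card (Fin n → Bool) := by simp
    _ ≤ Fintype.card (Fin m) := Fintype.card_le_of_injective f hfinj
    _ = m := Fintype.card_fin m
end

section
/- In the term algebra T(G) over a finite generating set G, evaluated in the semiring of finite languages 2_fin^{Σ*} over Σ = {a,b,#} with generators {a},{b},{#}: any term t whose evaluation equals the language { w # wᴿ : w ∈ {a,b}ⁿ } has length (number of symbols, equivalently number of leaves plus internal nodes) at least 2ⁿ. -/
/-- Terms over the generators {a},{b},{#} of the semiring of finite languages
over Σ = {a,b,#} (letters a, b modelled as `Sum.inl true/false`, # as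
`Sum.inr ()`). -/
inductive LTerm where
  | empt : LTerm              -- ∅, the zero
  | eps : LTerm               -- {ε}, the one
  | la : LTerm                -- {a}
  | lb : LTerm                -- {b}
  | hash : LTerm              -- {#}
  | union : LTerm → LTerm → LTerm
  | conc : LTerm → LTerm → LTerm

/-- Evaluation of a term in the semiring of languages over {a,b,#}. -/
def LTerm.eval : LTerm → Set (List (Bool ⊕ Unit))
  | .empt => ∅
  | .eps => {[]}
  | .la => {[Sum.inl true]}
  | .lb => {[Sum.inl false]}
  | .hash => {[Sum.inr ()]}
  | .union s t => s.eval ∪ t.eval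
  | .conc s t => {x | ∃ u ∈ s.eval, ∃ v ∈ t.eval, x = u ++ v}

/-- The length (number of symbols/nodes) of a term. -/
def LTerm.size : LTerm → ℕ
  | .empt | .eps | .la | .lb | .hash => 1
  | .union s t | .conc s t => s.size + t.size + 1

def LTerm.hashCount : LTerm → ℕ
  | .hash => 1
  | .empt | .eps | .la | .lb => 0
  | .union s t | .conc s t => s.hashCount + t.hashCount

lemma LTerm.hashCount_le_size (t : LTerm) : t.hashCount ≤ t.size := by
  induction t <;> simp_all [LTerm.hashCount, LTerm.size] <;> omega

abbrev Sig := Bool ⊕ Unit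
abbrev HASH : Sig := Sum.inr ()

lemma hash_not_mem_map (w : List Bool) : HASH ∉ w.map Sum.inl := by
  simp [HASH]

lemma split_unique {α : Type*} {x : α} {u v A B : List α}
    (h : u ++ x :: v = A ++ x :: B) (hA : x ∉ A) (hB : x ∉ B) : u = A ∧ v = B := by
  induction u generalizing A with
  | nil =>
    cases A with
    | nil => simpa using h
    | cons a A =>
      simp only [List.nil_append, List.cons_append, List.cons.injEq] at h
      exact absurd (h.1 ▸ (List.mem_cons_self : a ∈ a :: A)) hA
  | cons b u ih =>
    cases A with
    | nil =>
      simp only [List.nil_append, List.cons_append, List.cons.injEq] at h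
      exact absurd (h.2 ▸ List.mem_append_right u (List.mem_cons_self : x ∈ x :: v)) hB
    | cons a A =>
      simp only [List.cons_append, List.cons.injEq] at h
      obtain ⟨rfl, h2⟩ := h
      have := ih h2 (fun hx => hA (List.mem_cons_of_mem _ hx))
      exact ⟨by rw [this.1], this.2⟩

/-- Key structural lemma: contexts for each hash occurrence. -/
lemma key (t : LTerm) : ∃ P : List (Set (List Sig) × Set (List Sig)),
    P.length = t.hashCount ∧
    (∀ x ∈ t.eval, HASH ∈ x → ∃ p ∈ P, ∃ u v, u ∈ p.1 ∧ v ∈ p.2 ∧ x = u ++ HASH :: v) ∧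
    (∀ p ∈ P, ∀ u ∈ p.1, ∀ v ∈ p.2, u ++ HASH :: v ∈ t.eval) := by
  induction t with
  | empt => exact ⟨[], rfl, by simp [LTerm.eval], by simp⟩
  | eps =>
    refine ⟨[], rfl, ?_, by simp⟩
    rintro x hx hh
    simp only [LTerm.eval, Set.mem_singleton_iff] at hx
    subst hx; simp at hh
  | la =>
    refine ⟨[], rfl, ?_, by simp⟩
    rintro x hx hh
    simp only [LTerm.eval, Set.mem_singleton_iff] at hx
    subst hx; simp [HASH] at hh
  | lb =>
    refine ⟨[], rfl, ?_, by simp⟩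
    rintro x hx hh
    simp only [LTerm.eval, Set.mem_singleton_iff] at hx
    subst hx; simp [HASH] at hh
  | hash =>
    refine ⟨[({[]}, {[]})], rfl, ?_, ?_⟩
    · rintro x hx _
      simp only [LTerm.eval, Set.mem_singleton_iff] at hx
      exact ⟨_, List.mem_singleton_self _, [], [], rfl, rfl, by simp [hx, HASH]⟩
    · rintro p hp u hu v hv
      simp only [List.mem_singleton] at hp
      subst hp
      simp only [Set.mem_singleton_iff] at hu hv
      simp [hu, hv, LTerm.eval, HASH]
  | union s t ihs iht =>
    obtain ⟨Ps, hls, h1s, h2s⟩ := ihs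
    obtain ⟨Pt, hlt, h1t, h2t⟩ := iht
    refine ⟨Ps ++ Pt, by simp [hls, hlt, LTerm.hashCount], ?_, ?_⟩
    · rintro x hx hh
      rcases hx with hx | hx
      · obtain ⟨p, hp, u, v, h1, h2, h3⟩ := h1s x hx hh
        exact ⟨p, List.mem_append_left _ hp, u, v, h1, h2, h3⟩
      · obtain ⟨p, hp, u, v, h1, h2, h3⟩ := h1t x hx hh
        exact ⟨p, List.mem_append_right _ hp, u, v, h1, h2, h3⟩
    · rintro p hp u hu v hv
      rcases List.mem_append.1 hp with hp | hp
      · exact Or.inl (h2s p hp u hu v hv)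
      · exact Or.inr (h2t p hp u hu v hv)
  | conc s t ihs iht =>
    obtain ⟨Ps, hls, h1s, h2s⟩ := ihs
    obtain ⟨Pt, hlt, h1t, h2t⟩ := iht
    refine ⟨Ps.map (fun p => (p.1, {z | ∃ v ∈ p.2, ∃ y ∈ t.eval, z = v ++ y}))
        ++ Pt.map (fun p => ({z | ∃ x ∈ s.eval, ∃ u ∈ p.1, z = x ++ u}, p.2)),
      by simp [hls, hlt, LTerm.hashCount], ?_, ?_⟩
    · rintro x hx hh
      obtain ⟨a, ha, b, hb, rfl⟩ := hx
      rcases List.mem_append.1 hh with hma | hmb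
      · obtain ⟨p, hp, u, v, h1, h2, h3⟩ := h1s a ha hma
        refine ⟨(p.1, {z | ∃ v ∈ p.2, ∃ y ∈ t.eval, z = v ++ y}),
          List.mem_append_left _ (List.mem_map.2 ⟨p, hp, rfl⟩),
          u, v ++ b, h1, ⟨v, h2, b, hb, rfl⟩, by simp [h3]⟩
      · obtain ⟨p, hp, u, v, h1, h2, h3⟩ := h1t b hb hmb
        refine ⟨({z | ∃ x ∈ s.eval, ∃ u ∈ p.1, z = x ++ u}, p.2),
          List.mem_append_right _ (List.mem_map.2 ⟨p, hp, rfl⟩),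
          a ++ u, v, ⟨a, ha, u, h1, rfl⟩, h2, by simp [h3]⟩
    · rintro p hp u hu v hv
      rcases List.mem_append.1 hp with hp | hp
      · obtain ⟨q, hq, rfl⟩ := List.mem_map.1 hp
        obtain ⟨v', hv', y, hy, rfl⟩ := hv
        exact ⟨u ++ HASH :: v', h2s q hq u hu v' hv', y, hy, by simp⟩
      · obtain ⟨q, hq, rfl⟩ := List.mem_map.1 hp
        obtain ⟨x, hx, u', hu', rfl⟩ := hu
        exact ⟨x, hx, u' ++ HASH :: v, h2t q hq u' hu' v hv, by simp⟩

/-- Any term evaluating to { w#wᴿ : w ∈ {a,b}ⁿ } has length at least 2ⁿ. -/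
theorem palindrome_term_size (n : ℕ) (t : LTerm)
    (h : t.eval = {x : List (Bool ⊕ Unit) | ∃ w : List Bool, w.length = n ∧
      x = (w.map Sum.inl) ++ (Sum.inr ()) :: (w.reverse.map Sum.inl)}) :
    2 ^ n ≤ t.size := by
  obtain ⟨P, hlen, h1, h2⟩ := key t
  -- palindrome of a word
  set pal : List Bool → List Sig :=
    fun w => (w.map Sum.inl) ++ HASH :: (w.reverse.map Sum.inl) with hpal
  have hmem : ∀ w : List Bool, w.length = n → pal w ∈ t.eval := by
    intro w hw; rw [h]; exact ⟨w, hw, rfl⟩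
  -- for each vector, an index exists
  have hex : ∀ w : List.Vector Bool n, ∃ i : Fin P.length,
      ∃ u v, u ∈ (P.get i).1 ∧ v ∈ (P.get i).2 ∧ pal w.toList = u ++ HASH :: v := by
    intro w
    obtain ⟨p, hp, u, v, hu, hv, hx⟩ := h1 _ (hmem w.toList w.toList_length)
      (by simp [hpal, HASH])
    obtain ⟨i, hi⟩ := List.mem_iff_get.1 hp
    exact ⟨i, u, v, by rw [hi]; exact hu, by rw [hi]; exact hv, hx⟩
  have key2 : ∀ (w : List Bool) (u v : List Sig), pal w = u ++ HASH :: v →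
      u = w.map Sum.inl ∧ v = w.reverse.map Sum.inl := by
    intro w u v hx
    exact split_unique hx.symm (hash_not_mem_map w) (hash_not_mem_map w.reverse)
  classical
  let f : List.Vector Bool n → Fin P.length := fun w => (hex w).choose
  have hinj : Function.Injective f := by
    intro w1 w2 hf
    obtain ⟨u1, v1, hu1, hv1, hx1⟩ := (hex w1).choose_spec
    obtain ⟨u2, v2, hu2, hv2, hx2⟩ := (hex w2).choose_spec
    rw [show (hex w2).choose = (hex w1).choose from hf.symm] at hu2 hv2
    obtain ⟨e1, e2⟩ := key2 _ _ _ hx1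
    obtain ⟨e3, e4⟩ := key2 _ _ _ hx2
    -- the mixed word u1 ++ # :: v2 is in eval t, hence a palindrome
    have hmix : u1 ++ HASH :: v2 ∈ t.eval :=
      h2 _ (List.mem_iff_get.2 ⟨_, rfl⟩) u1 hu1 v2 hv2
    rw [h] at hmix
    obtain ⟨w, hwl, hw⟩ := hmix
    have h5 := split_unique (e1 ▸ e4 ▸ hw :
        (w1.toList.map Sum.inl) ++ HASH :: (w2.toList.reverse.map Sum.inl)
          = (w.map Sum.inl) ++ HASH :: (w.reverse.map Sum.inl))
      (hash_not_mem_map _) (hash_not_mem_map _)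
    have hw1 : w1.toList = w :=
      List.map_injective_iff.2 Sum.inl_injective h5.1
    have hw2 : w2.toList.reverse = w.reverse :=
      List.map_injective_iff.2 Sum.inl_injective h5.2
    have : w1.toList = w2.toList := by
      rw [hw1, ← List.reverse_reverse w, ← hw2, List.reverse_reverse]
    exact List.Vector.toList_injective this
  calc 2 ^ n = Fintype.card (List.Vector Bool n) := by simp [card_vector]
    _ ≤ Fintype.card (Fin P.length) := Fintype.card_le_of_injective f hinj
    _ = P.length := Fintype.card_fin _
    _ = t.hashCount := hlen
    _ ≤ t.size := t.hashCount_le_size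
end
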